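/- Let R be a discrete valuation ring with uniformizer π. The map sending (0, x, y) ↦ (x, x·y) and (1, x, y) ↦ (π·x·y, y), for x, y ∈ R∖{0}, is a well-defined bijection from the disjoint union ({0} × (R∖{0})²) ∪ ({1} × (R∖{0})²) onto (R∖{0})². (Its two branches map bijectively onto X₁ = {(a,b) ∈ (R∖{0})² : a divides b} and X₂ = {(a,b) ∈ (R∖{0})² : a does not divide b}, which partition (R∖{0})².) -/

import Mathlib

open IsDiscreteValuationRing in
lemma key_dvd {R : Type*} [CommRing R] [IsDomain R] [IsDiscreteValuationRing R]
    {π : R} (hπ : Irreducible π) {a b : R} (hb : b ≠ 0) (h : ¬ a ∣ b) :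
    π * b ∣ a := by
  rw [← addVal_le_iff_dvd] at h ⊢
  push_neg at h
  rw [addVal_mul, addVal_uniformizer hπ, add_comm]
  exact Order.add_one_le_of_lt h

lemma not_dvd_self' {R : Type*} [CommRing R] [IsDomain R]
    {π : R} (hπ : Irreducible π) {x y : R} (hy : y ≠ 0) :
    ¬ (π * x * y ∣ y) := by
  rintro ⟨t, ht⟩
  have h0 : y * (1 - π * (x * t)) = 0 := by linear_combination ht
  rcases mul_eq_zero.mp h0 with h | h
  · exact hy h
  · have h1 : π * (x * t) = 1 := by linear_combination -h
    exact hπ.not_isUnit (IsUnit.of_mul_eq_one _ h1)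

open Classical in
theorem disjoint_union_Rstar_sq_bij (R : Type*) [CommRing R] [IsDomain R]
    [IsDiscreteValuationRing R] (π : R) (hπ : Irreducible π) :
    Set.BijOn
      (fun q : R × R × R =>
        if q.1 = 0 then (q.2.1, q.2.1 * q.2.2) else (π * q.2.1 * q.2.2, q.2.2))
      (({0} ×ˢ ({x : R | x ≠ 0} ×ˢ {x : R | x ≠ 0})) ∪
        ({1} ×ˢ ({x : R | x ≠ 0} ×ˢ {x : R | x ≠ 0})))
      ({x : R | x ≠ 0} ×ˢ {x : R | x ≠ 0}) ∧
    Set.BijOn (fun q : R × R => (q.1, q.1 * q.2))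
      ({x : R | x ≠ 0} ×ˢ {x : R | x ≠ 0})
      {q : R × R | (q.1 ≠ 0 ∧ q.2 ≠ 0) ∧ q.1 ∣ q.2} ∧
    Set.BijOn (fun q : R × R => (π * q.1 * q.2, q.2))
      ({x : R | x ≠ 0} ×ˢ {x : R | x ≠ 0})
      {q : R × R | (q.1 ≠ 0 ∧ q.2 ≠ 0) ∧ ¬ q.1 ∣ q.2} ∧
    {q : R × R | (q.1 ≠ 0 ∧ q.2 ≠ 0) ∧ q.1 ∣ q.2} ∪
        {q : R × R | (q.1 ≠ 0 ∧ q.2 ≠ 0) ∧ ¬ q.1 ∣ q.2} =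
      {x : R | x ≠ 0} ×ˢ {x : R | x ≠ 0} ∧
    {q : R × R | (q.1 ≠ 0 ∧ q.2 ≠ 0) ∧ q.1 ∣ q.2} ∩
        {q : R × R | (q.1 ≠ 0 ∧ q.2 ≠ 0) ∧ ¬ q.1 ∣ q.2} =
      ∅ := by
  have hπ0 : π ≠ 0 := hπ.ne_zero
  -- Branch 1
  have h1 : Set.BijOn (fun q : R × R => (q.1, q.1 * q.2))
      ({x : R | x ≠ 0} ×ˢ {x : R | x ≠ 0})
      {q : R × R | (q.1 ≠ 0 ∧ q.2 ≠ 0) ∧ q.1 ∣ q.2} := by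
    refine ⟨?_, ?_, ?_⟩
    · rintro ⟨x, y⟩ ⟨hx, hy⟩
      exact ⟨⟨hx, mul_ne_zero hx hy⟩, Dvd.intro y rfl⟩
    · rintro ⟨x, y⟩ ⟨hx, hy⟩ ⟨x', y'⟩ ⟨hx', hy'⟩ h
      simp only [Prod.mk.injEq] at h
      obtain ⟨rfl, h2⟩ := h
      exact Prod.ext rfl (mul_left_cancel₀ hx h2)
    · rintro ⟨a, b⟩ ⟨⟨ha, hb⟩, c, hbc⟩
      have hbc' : b = a * c := hbc
      exact ⟨(a, c), ⟨ha, fun h0 => hb (show b = 0 from by rw [hbc', show c = 0 from h0, mul_zero])⟩,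
        Prod.ext rfl hbc'.symm⟩
  -- Branch 2
  have h2 : Set.BijOn (fun q : R × R => (π * q.1 * q.2, q.2))
      ({x : R | x ≠ 0} ×ˢ {x : R | x ≠ 0})
      {q : R × R | (q.1 ≠ 0 ∧ q.2 ≠ 0) ∧ ¬ q.1 ∣ q.2} := by
    refine ⟨?_, ?_, ?_⟩
    · rintro ⟨x, y⟩ ⟨hx, hy⟩
      exact ⟨⟨mul_ne_zero (mul_ne_zero hπ0 hx) hy, hy⟩, not_dvd_self' hπ hy⟩
    · rintro ⟨x, y⟩ ⟨hx, hy⟩ ⟨x', y'⟩ ⟨hx', hy'⟩ h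
      simp only [Prod.mk.injEq] at h
      obtain ⟨h1', rfl⟩ := h
      refine Prod.ext ?_ rfl
      have := mul_right_cancel₀ hy h1'
      exact mul_left_cancel₀ hπ0 this
    · rintro ⟨a, b⟩ ⟨⟨ha, hb⟩, hnd⟩
      obtain ⟨x, hx⟩ := key_dvd hπ hb hnd
      have hx' : a = π * b * x := hx
      refine ⟨(x, b), ⟨fun h0 => ha (show a = 0 from by rw [hx', show x = 0 from h0, mul_zero]), hb⟩, ?_⟩
      show ((π * x * b, b) : R × R) = (a, b)
      exact Prod.ext (by rw [hx']; ring) rfl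
  -- union and intersection
  have hU : {q : R × R | (q.1 ≠ 0 ∧ q.2 ≠ 0) ∧ q.1 ∣ q.2} ∪
      {q : R × R | (q.1 ≠ 0 ∧ q.2 ≠ 0) ∧ ¬ q.1 ∣ q.2} =
      {x : R | x ≠ 0} ×ˢ {x : R | x ≠ 0} := by
    ext ⟨a, b⟩
    simp only [Set.mem_union, Set.mem_setOf_eq, Set.mem_prod]
    by_cases h : a ∣ b <;> tauto
  have hI : {q : R × R | (q.1 ≠ 0 ∧ q.2 ≠ 0) ∧ q.1 ∣ q.2} ∩
      {q : R × R | (q.1 ≠ 0 ∧ q.2 ≠ 0) ∧ ¬ q.1 ∣ q.2} = ∅ := by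
    ext ⟨a, b⟩
    simp only [Set.mem_inter_iff, Set.mem_setOf_eq, Set.mem_empty_iff_false, iff_false]
    tauto
  refine ⟨?_, h1, h2, hU, hI⟩
  -- the big bijection
  refine ⟨?_, ?_, ?_⟩
  · rintro ⟨e, x, y⟩ (⟨he, hx, hy⟩ | ⟨he, hx, hy⟩)
    · simp only [Set.mem_singleton_iff] at he
      subst he
      simp only [if_pos rfl]
      exact ⟨hx, mul_ne_zero hx hy⟩
    · simp only [Set.mem_singleton_iff] at he
      subst he
      simp only [if_neg (one_ne_zero : (1:R) ≠ 0)]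
      exact ⟨mul_ne_zero (mul_ne_zero hπ0 hx) hy, hy⟩
  · rintro ⟨e, x, y⟩ hq ⟨e', x', y'⟩ hq' h
    rcases hq with ⟨he, hx, hy⟩ | ⟨he, hx, hy⟩ <;>
      rcases hq' with ⟨he', hx', hy'⟩ | ⟨he', hx', hy'⟩ <;>
      simp only [Set.mem_singleton_iff] at he he' <;> subst he <;> subst he'
    · simp only [if_pos rfl] at h
      have := h1.injOn ⟨hx, hy⟩ ⟨hx', hy'⟩ h
      simp only [Prod.mk.injEq] at this ⊢
      exact ⟨trivial, this.1, this.2⟩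
    · simp only [eq_self_iff_true, if_true, one_ne_zero, if_false] at h
      have hm1 : ((x, x*y) : R × R) ∈ {q : R × R | (q.1 ≠ 0 ∧ q.2 ≠ 0) ∧ q.1 ∣ q.2} :=
        h1.mapsTo ⟨hx, hy⟩
      have hm2 : ((π * x' * y', y') : R × R) ∈
          {q : R × R | (q.1 ≠ 0 ∧ q.2 ≠ 0) ∧ ¬ q.1 ∣ q.2} := h2.mapsTo ⟨hx', hy'⟩
      rw [h] at hm1
      exact (Set.eq_empty_iff_forall_notMem.mp hI _ ⟨hm1, hm2⟩).elim
    · simp only [eq_self_iff_true, if_true, one_ne_zero, if_false] at h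
      have hm1 : ((x', x'*y') : R × R) ∈ {q : R × R | (q.1 ≠ 0 ∧ q.2 ≠ 0) ∧ q.1 ∣ q.2} :=
        h1.mapsTo ⟨hx', hy'⟩
      have hm2 : ((π * x * y, y) : R × R) ∈
          {q : R × R | (q.1 ≠ 0 ∧ q.2 ≠ 0) ∧ ¬ q.1 ∣ q.2} := h2.mapsTo ⟨hx, hy⟩
      rw [← h] at hm1
      exact (Set.eq_empty_iff_forall_notMem.mp hI _ ⟨hm1, hm2⟩).elim
    · simp only [if_neg (one_ne_zero : (1:R) ≠ 0)] at h
      have := h2.injOn ⟨hx, hy⟩ ⟨hx', hy'⟩ h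
      simp only [Prod.mk.injEq] at this ⊢
      exact ⟨trivial, this.1, this.2⟩
  · rintro ⟨a, b⟩ ⟨ha, hb⟩
    by_cases hd : a ∣ b
    · obtain ⟨⟨x, y⟩, ⟨hx, hy⟩, hxy⟩ := h1.surjOn (a := (a, b)) ⟨⟨ha, hb⟩, hd⟩
      exact ⟨(0, x, y), Or.inl ⟨rfl, hx, hy⟩, by simpa using hxy⟩
    · obtain ⟨⟨x, y⟩, ⟨hx, hy⟩, hxy⟩ := h2.surjOn (a := (a, b)) ⟨⟨ha, hb⟩, hd⟩
      exact ⟨(1, x, y), Or.inr ⟨rfl, hx, hy⟩,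
        by simpa [if_neg (one_ne_zero : (1:R) ≠ 0)] using hxy⟩
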